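/- For a fixed prime p and a fixed t ≥ 1, the number of multisets {a_1, ..., a_R} of nonnegative integers with R = (p-1)t + 1 and ∑_{i=1}^R p^{-a_i} = 1 is at most 2^{t-1} = 2^{(R-1)/(p-1) - 1} for t ≥ 1. -/

import Mathlib

namespace Stmt19

/-- remaining mass at scale j, as a rational -/
def Rq (p : ℕ) (s : Multiset ℕ) (j : ℕ) : ℚ :=
  ((s.filter (fun a => j < a)).map (fun a => ((p : ℚ) ^ a)⁻¹)).sum * (p : ℚ) ^ j

/-- remaining mass as a natural number, via recurrence -/
def rf (p : ℕ) (s : Multiset ℕ) : ℕ → ℕ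
  | 0 => 1
  | (j+1) => p * rf p s j - s.count (j+1)

variable {p t : ℕ} {s : Multiset ℕ}

lemma Rq_nonneg (hp : 2 ≤ p) (j : ℕ) : 0 ≤ Rq p s j := by
  apply mul_nonneg
  · apply Multiset.sum_nonneg
    intro x hx
    obtain ⟨a, _, rfl⟩ := Multiset.mem_map.mp hx
    positivity
  · positivity

lemma Rq_eq_zero_iff (hp : 2 ≤ p) (j : ℕ) : Rq p s j = 0 ↔ ∀ a ∈ s, a ≤ j := by
  have hppos : (0:ℚ) < (p:ℚ) ^ j := by positivity
  rw [Rq, mul_eq_zero]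
  constructor
  · rintro (h | h)
    · intro a ha
      by_contra hja
      have hmem : ((p:ℚ)^a)⁻¹ ∈ (s.filter (fun a => j < a)).map (fun a => ((p : ℚ) ^ a)⁻¹) :=
        Multiset.mem_map_of_mem _ (Multiset.mem_filter.mpr ⟨ha, by omega⟩)
      have hterm : (0:ℚ) < ((p:ℚ)^a)⁻¹ := by positivity
      have := Multiset.sum_nonneg (s := ((s.filter (fun a => j < a)).map (fun a => ((p : ℚ) ^ a)⁻¹)).erase (((p:ℚ)^a)⁻¹)) (by
        intro x hx
        obtain ⟨b, _, rfl⟩ := Multiset.mem_map.mp (Multiset.mem_of_mem_erase hx)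
        positivity)
      have hc := Multiset.cons_erase hmem
      rw [← hc, Multiset.sum_cons] at h
      linarith
    · linarith
  · intro h
    left
    have : s.filter (fun a => j < a) = 0 := by
      rw [Multiset.filter_eq_nil]
      intro a ha
      exact not_lt.mpr (h a ha)
    rw [this]
    simp


lemma filter_split (s : Multiset ℕ) (j : ℕ) :
    s.filter (fun a => j < a) = s.filter (fun a => j + 1 < a) + s.filter (fun a => a = j + 1) := by
  ext b
  rw [Multiset.count_add, Multiset.count_filter, Multiset.count_filter, Multiset.count_filter]
  by_cases h1 : j + 1 < b
  · rw [if_pos h1, if_pos (show j < b by omega), if_neg (show ¬ b = j + 1 by omega), add_zero]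
  · by_cases h2 : b = j + 1
    · rw [if_pos h2, if_neg h1, if_pos (show j < b by omega), zero_add]
    · rw [if_neg h1, if_neg h2, if_neg (show ¬ j < b by omega)]

lemma Rq_succ (hp : 2 ≤ p) (j : ℕ) :
    Rq p s (j+1) = p * Rq p s j - s.count (j+1) := by
  rw [Rq, Rq, filter_split s j, Multiset.map_add, Multiset.sum_add, Multiset.filter_eq',
    Multiset.map_replicate, Multiset.sum_replicate]
  have h1 : ((p:ℚ)^(j+1))⁻¹ * (p:ℚ)^(j+1) = 1 := by
    rw [inv_mul_cancel₀]; positivity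
  rw [add_mul, nsmul_eq_mul, pow_succ]
  have hp0 : (p:ℚ) ≠ 0 := by positivity
  field_simp
  ring

lemma sum_terms_pos (hp : 2 ≤ p) {s : Multiset ℕ} (hne : s ≠ 0) :
    0 < (s.map fun a => ((p:ℚ)^a)⁻¹).sum := by
  obtain ⟨a, ha⟩ := Multiset.exists_mem_of_ne_zero hne
  have hmem := Multiset.mem_map_of_mem (fun a => ((p:ℚ)^a)⁻¹) ha
  have hrest : 0 ≤ ((s.map fun a => ((p:ℚ)^a)⁻¹).erase (((p:ℚ)^a)⁻¹)).sum := by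
    apply Multiset.sum_nonneg
    intro x hx
    obtain ⟨b, _, rfl⟩ := Multiset.mem_map.mp (Multiset.mem_of_mem_erase hx)
    positivity
  have hc := Multiset.cons_erase hmem
  rw [← hc, Multiset.sum_cons]
  have : (0:ℚ) < ((p:ℚ)^a)⁻¹ := by positivity
  linarith

lemma zero_not_mem (hp : 2 ≤ p) (ht : 1 ≤ t)
    (hcard : Multiset.card s = (p - 1) * t + 1)
    (hsum : (s.map (fun a => ((p : ℚ) ^ a)⁻¹)).sum = 1) : 0 ∉ s := by
  intro h
  obtain ⟨s', rfl⟩ := Multiset.exists_cons_of_mem h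
  rw [Multiset.map_cons, Multiset.sum_cons] at hsum
  simp only [pow_zero, inv_one] at hsum
  have hs' : s' ≠ 0 := by
    intro h0
    rw [h0] at hcard
    simp at hcard
    omega
  have := sum_terms_pos hp hs'
  linarith

lemma Rq_zero (hp : 2 ≤ p) (h0 : 0 ∉ s)
    (hsum : (s.map (fun a => ((p : ℚ) ^ a)⁻¹)).sum = 1) : Rq p s 0 = 1 := by
  rw [Rq]
  have : s.filter (fun a => 0 < a) = s := by
    rw [Multiset.filter_eq_self]
    intro a ha
    have : a ≠ 0 := fun h => h0 (h ▸ ha)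
    omega
  rw [this, pow_zero, mul_one, hsum]

lemma rf_cast (hp : 2 ≤ p) (h0 : Rq p s 0 = 1) : ∀ j, (rf p s j : ℚ) = Rq p s j := by
  intro j
  induction j with
  | zero => simpa [rf] using h0.symm
  | succ j ih =>
    have hle : s.count (j+1) ≤ p * rf p s j := by
      by_contra h
      have h2 := Rq_nonneg (s := s) hp (j+1)
      rw [Rq_succ hp, ← ih] at h2
      push_neg at h
      have : (p * rf p s j : ℚ) < (s.count (j+1) : ℚ) := by exact_mod_cast h
      push_cast at h2
      linarith
    rw [rf, Rq_succ hp, ← ih]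
    push_cast [hle]
    ring

lemma count_le (hp : 2 ≤ p) (h0 : Rq p s 0 = 1) (j : ℕ) :
    s.count (j+1) ≤ p * rf p s j := by
  by_contra h
  have h2 := Rq_nonneg (s := s) hp (j+1)
  rw [Rq_succ hp, ← rf_cast hp h0] at h2
  push_neg at h
  have : (p * rf p s j : ℚ) < (s.count (j+1) : ℚ) := by exact_mod_cast h
  push_cast at h2
  linarith

lemma count_eq (hp : 2 ≤ p) (h0 : Rq p s 0 = 1) (j : ℕ) :
    s.count (j+1) = p * rf p s j - rf p s (j+1) := by
  have h1 : rf p s (j+1) = p * rf p s j - s.count (j+1) := rfl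
  have h2 := count_le hp h0 j
  omega

lemma sum_identity (hp : 2 ≤ p) (h0 : Rq p s 0 = 1) (T : ℕ) :
    (p - 1 : ℚ) * ∑ j ∈ Finset.range T, Rq p s j + 1 - Rq p s T
      = ∑ j ∈ Finset.range T, (s.count (j+1) : ℚ) := by
  induction T with
  | zero => simp [h0]
  | succ T ih =>
    rw [Finset.sum_range_succ, Finset.sum_range_succ, ← ih, Rq_succ hp]
    ring

lemma count_sum_card (h0 : 0 ∉ s) (T : ℕ) :
    ∑ j ∈ Finset.range T, s.count (j+1)
      + Multiset.card (s.filter (fun a => T < a)) = Multiset.card s := by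
  induction T with
  | zero =>
    have : s.filter (fun a => 0 < a) = s := by
      rw [Multiset.filter_eq_self]
      intro a ha
      have : a ≠ 0 := fun h => h0 (h ▸ ha)
      omega
    simp [this]
  | succ T ih =>
    rw [filter_split s T, Multiset.card_add, Multiset.filter_eq',
      Multiset.card_replicate] at ih
    rw [Finset.sum_range_succ]
    omega

lemma mem_le_t (hp : 2 ≤ p) (ht : 1 ≤ t)
    (hcard : Multiset.card s = (p - 1) * t + 1)
    (hsum : (s.map (fun a => ((p : ℚ) ^ a)⁻¹)).sum = 1) : ∀ a ∈ s, a ≤ t := by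
  have h0 : 0 ∉ s := zero_not_mem hp ht hcard hsum
  have hRq0 : Rq p s 0 = 1 := Rq_zero hp h0 hsum
  by_contra hcon
  push_neg at hcon
  obtain ⟨a, ha, hat⟩ := hcon
  -- all partial remainders are at least 1
  have hpos : ∀ j, j ≤ t → (1:ℚ) ≤ Rq p s j := by
    intro j hj
    have hne : Rq p s j ≠ 0 := by
      rw [Ne, Rq_eq_zero_iff hp]
      push_neg
      exact ⟨a, ha, by omega⟩
    have h1 : (rf p s j : ℚ) = Rq p s j := rf_cast hp hRq0 j
    have : rf p s j ≠ 0 := by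
      intro h
      rw [h] at h1
      exact hne (by exact_mod_cast h1.symm)
    have : 1 ≤ rf p s j := by omega
    calc (1:ℚ) ≤ (rf p s j : ℚ) := by exact_mod_cast this
    _ = Rq p s j := h1
  have hsumr : (t : ℚ) ≤ ∑ j ∈ Finset.range t, Rq p s j := by
    calc (t:ℚ) = ∑ _j ∈ Finset.range t, (1:ℚ) := by simp
    _ ≤ ∑ j ∈ Finset.range t, Rq p s j := by
        apply Finset.sum_le_sum
        intro j hj
        exact hpos j (by exact (Finset.mem_range.mp hj).le)
  set c := Multiset.card (s.filter (fun a => t < a)) with hc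
  have hc1 : 1 ≤ c := by
    have : a ∈ s.filter (fun a => t < a) := Multiset.mem_filter.mpr ⟨ha, hat⟩
    have := Multiset.card_pos_iff_exists_mem.mpr ⟨a, this⟩
    omega
  -- upper bound on Rq t
  have hub : Rq p s t ≤ (c:ℚ) / p := by
    have hterm : ∀ x ∈ (s.filter (fun a => t < a)).map (fun a => ((p : ℚ) ^ a)⁻¹),
        x ≤ ((p:ℚ)^(t+1))⁻¹ := by
      intro x hx
      obtain ⟨b, hb, rfl⟩ := Multiset.mem_map.mp hx
      have hbt : t + 1 ≤ b := by
        have := (Multiset.mem_filter.mp hb).2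
        omega
      have h1 : (p:ℚ)^(t+1) ≤ (p:ℚ)^b :=
        pow_le_pow_right₀ (by exact_mod_cast Nat.one_le_of_lt hp) hbt
      exact inv_anti₀ (by positivity) h1
    have hsle := Multiset.sum_le_card_nsmul _ _ hterm
    rw [Multiset.card_map] at hsle
    rw [Rq]
    have hppos : (0:ℚ) < p := by exact_mod_cast (by omega : 0 < p)
    calc (Multiset.map (fun a => ((p:ℚ) ^ a)⁻¹) (Multiset.filter (fun a => t < a) s)).sum * (p:ℚ) ^ t
        ≤ (c • ((p:ℚ)^(t+1))⁻¹) * (p:ℚ)^t := by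
          apply mul_le_mul_of_nonneg_right hsle (by positivity)
    _ = (c:ℚ) / p := by
          rw [nsmul_eq_mul, pow_succ]
          field_simp
  -- lower bound on Rq t
  have hlb : (c:ℚ) ≤ Rq p s t := by
    have hid := sum_identity hp hRq0 t
    have hcc := count_sum_card h0 t
    have hnat : ∑ j ∈ Finset.range t, s.count (j+1) + c = (p-1)*t + 1 := by omega
    have hcsum : (∑ j ∈ Finset.range t, (s.count (j+1) : ℚ)) + (c:ℚ)
        = ((p:ℚ)-1)*t + 1 := by
      have h := congrArg (fun n : ℕ => (n:ℚ)) hnat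
      push_cast [Nat.cast_sub (show 1 ≤ p by omega)] at h
      convert h using 2
    rw [← hid] at hcsum
    have hp1 : (1:ℚ) ≤ (p:ℚ) - 1 := by
      have : (2:ℚ) ≤ (p:ℚ) := by exact_mod_cast hp
      linarith
    nlinarith [hsumr, hcsum]
  have hppos : (2:ℚ) ≤ (p:ℚ) := by exact_mod_cast hp
  have hcq : (1:ℚ) ≤ (c:ℚ) := by exact_mod_cast hc1
  have : (c:ℚ)/p < c := by
    rw [div_lt_iff₀ (by linarith)]
    nlinarith
  linarith

lemma rf_t_eq_zero (hp : 2 ≤ p) (ht : 1 ≤ t)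
    (hcard : Multiset.card s = (p - 1) * t + 1)
    (hsum : (s.map (fun a => ((p : ℚ) ^ a)⁻¹)).sum = 1) : rf p s t = 0 := by
  have h0 : 0 ∉ s := zero_not_mem hp ht hcard hsum
  have hRq0 : Rq p s 0 = 1 := Rq_zero hp h0 hsum
  have : Rq p s t = 0 := (Rq_eq_zero_iff hp t).mpr (mem_le_t hp ht hcard hsum)
  have h1 := rf_cast hp hRq0 t
  rw [this] at h1
  exact_mod_cast h1

lemma rf_zero_tail (hp : 2 ≤ p) (h0 : Rq p s 0 = 1) {j : ℕ} (h : rf p s j = 0) :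
    rf p s (j+1) = 0 := by
  have h1 := rf_cast hp h0 j
  rw [h] at h1
  have h2 : Rq p s j = 0 := by exact_mod_cast h1.symm
  have h3 : Rq p s (j+1) = 0 := by
    rw [Rq_eq_zero_iff hp] at h2 ⊢
    intro a ha
    exact le_trans (h2 a ha) (by omega)
  have h4 := rf_cast hp h0 (j+1)
  rw [h3] at h4
  exact_mod_cast h4

lemma rf_sum (hp : 2 ≤ p) (ht : 1 ≤ t)
    (hcard : Multiset.card s = (p - 1) * t + 1)
    (hsum : (s.map (fun a => ((p : ℚ) ^ a)⁻¹)).sum = 1) :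
    ∑ j ∈ Finset.range t, rf p s j = t := by
  have h0 : 0 ∉ s := zero_not_mem hp ht hcard hsum
  have hRq0 : Rq p s 0 = 1 := Rq_zero hp h0 hsum
  have hid := sum_identity hp hRq0 t
  have hfil : s.filter (fun a => t < a) = 0 := by
    rw [Multiset.filter_eq_nil]
    intro a ha
    exact not_lt.mpr (mem_le_t hp ht hcard hsum a ha)
  have hcc := count_sum_card h0 t
  rw [hfil] at hcc
  simp only [Multiset.card_zero, add_zero] at hcc
  have hRqt : Rq p s t = 0 := (Rq_eq_zero_iff hp t).mpr (mem_le_t hp ht hcard hsum)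
  rw [hRqt, sub_zero] at hid
  have hnat : (∑ j ∈ Finset.range t, (s.count (j+1):ℚ)) = ((p:ℚ)-1)*t + 1 := by
    rw [← hid]
    have h := congrArg (fun n : ℕ => (n:ℚ)) (hcc.trans hcard)
    push_cast [Nat.cast_sub (show 1 ≤ p by omega)] at h
    rw [hid]
    convert h using 2
  rw [hnat] at hid
  have hp1 : (p:ℚ) - 1 ≠ 0 := by
    have : (2:ℚ) ≤ (p:ℚ) := by exact_mod_cast hp
    intro h; linarith
  have hq : (∑ j ∈ Finset.range t, Rq p s j) = (t:ℚ) :=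
    mul_left_cancel₀ hp1 (show ((p:ℚ)-1) * (∑ j ∈ Finset.range t, Rq p s j)
      = ((p:ℚ)-1) * (t:ℚ) by linarith)
  have : ((∑ j ∈ Finset.range t, rf p s j : ℕ) : ℚ) = (t:ℚ) := by
    push_cast
    rw [Finset.sum_congr rfl (fun j _ => rf_cast hp hRq0 j)]
    exact hq
  exact_mod_cast this

lemma count_gt (hp : 2 ≤ p) (ht : 1 ≤ t)
    (hcard : Multiset.card s = (p - 1) * t + 1)
    (hsum : (s.map (fun a => ((p : ℚ) ^ a)⁻¹)).sum = 1) {j : ℕ} (hj : t < j) :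
    s.count j = 0 := by
  rw [Multiset.count_eq_zero]
  intro h
  exact absurd (mem_le_t hp ht hcard hsum j h) (by omega)

lemma list_range_map_sum (f : ℕ → ℕ) (n : ℕ) :
    ((List.range n).map f).sum = ∑ i ∈ Finset.range n, f i := by
  induction n with
  | zero => simp
  | succ n ih =>
    rw [List.range_succ, List.map_append, List.sum_append, Finset.sum_range_succ, ih]
    simp

/-- the finset of all compositions of n into positive parts -/
def comps : ℕ → Finset (List ℕ)
  | 0 => {[]}
  | (n+1) => (Finset.range (n+1)).biUnion fun v => (comps (n - v)).image (List.cons (v+1))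
decreasing_by simp_wf

lemma two_pow_sum (n : ℕ) : ∑ m ∈ Finset.range n, 2^m < 2^n := by
  induction n with
  | zero => simp
  | succ n ih =>
    rw [Finset.sum_range_succ, pow_succ]
    omega

lemma comps_card (n : ℕ) : (comps n).card ≤ 2^n := by
  induction n using Nat.strong_induction_on with
  | _ n ih =>
    match n with
    | 0 => simp [comps]
    | (m+1) =>
      rw [comps]
      calc ((Finset.range (m+1)).biUnion fun v => (comps (m - v)).image (List.cons (v+1))).card
          ≤ ∑ v ∈ Finset.range (m+1), ((comps (m - v)).image (List.cons (v+1))).card :=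
            Finset.card_biUnion_le
        _ ≤ ∑ v ∈ Finset.range (m+1), 2^(m-v) := by
            apply Finset.sum_le_sum
            intro v hv
            exact le_trans Finset.card_image_le (ih (m-v) (by omega))
        _ = ∑ v ∈ Finset.range (m+1), 2^(m+1-1-v) := by
            apply Finset.sum_congr rfl
            intro v hv
            have h : m + 1 - 1 - v = m - v := by omega
            rw [h]
        _ = ∑ v ∈ Finset.range (m+1), 2^v := Finset.sum_range_reflect (fun v => 2^v) (m+1)
        _ ≤ 2^(m+1) := (two_pow_sum _).le

lemma comps_mem : ∀ (l : List ℕ), (∀ x ∈ l, 0 < x) → l ∈ comps l.sum := by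
  intro l
  induction l with
  | nil => intro _; simp [comps]
  | cons a tl ih =>
    intro hpos
    have ha : 0 < a := hpos a List.mem_cons_self
    have hsum : (a :: tl).sum = (a - 1 + tl.sum) + 1 := by
      rw [List.sum_cons]; omega
    rw [hsum, comps]
    apply Finset.mem_biUnion.mpr
    refine ⟨a - 1, Finset.mem_range.mpr (by omega), ?_⟩
    apply Finset.mem_image.mpr
    refine ⟨tl, ?_, ?_⟩
    · have : a - 1 + tl.sum - (a - 1) = tl.sum := by omega
      rw [this]
      exact ih (fun x hx => hpos x (List.mem_cons_of_mem a hx))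
    · have : a - 1 + 1 = a := by omega
      rw [this]

/-- downward-closed subsets of range are ranges -/
lemma filter_range_eq (f : ℕ → ℕ) (m : ℕ) (hzt : ∀ j, f j = 0 → f (j+1) = 0) :
    (Finset.range m).filter (fun i => f i ≠ 0)
      = Finset.range (((Finset.range m).filter (fun i => f i ≠ 0)).card) := by
  have hdc : ∀ i j, i ≤ j → f i = 0 → f j = 0 := by
    intro i j hij h
    induction j, hij using Nat.le_induction with
    | base => exact h
    | succ j hij ihj => exact hzt j ihj
  set S := (Finset.range m).filter (fun i => f i ≠ 0) with hS
  ext i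
  simp only [Finset.mem_range]
  constructor
  · intro hi
    have hsub : Finset.range (i+1) ⊆ S := by
      intro j hj
      have hji := Finset.mem_range.mp hj
      have hj' : j ≤ i := by omega
      have hi' := Finset.mem_filter.mp hi
      refine Finset.mem_filter.mpr ⟨Finset.mem_range.mpr (by
        have := Finset.mem_range.mp hi'.1; omega), ?_⟩
      intro hfj
      exact hi'.2 (hdc j i hj' hfj)
    calc i < i + 1 := Nat.lt_succ_self i
      _ = (Finset.range (i+1)).card := (Finset.card_range _).symm
      _ ≤ S.card := Finset.card_le_card hsub
  · intro hi
    by_contra hcon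
    rcases Decidable.em (i < m) with him | him
    · have hfi : f i = 0 := by
        by_contra hfi
        exact hcon (Finset.mem_filter.mpr ⟨Finset.mem_range.mpr him, hfi⟩)
      have hsub : S ⊆ Finset.range i := by
        intro j hj
        obtain ⟨hj1, hj2⟩ := Finset.mem_filter.mp hj
        rw [Finset.mem_range]
        by_contra hji
        exact hj2 (hdc i j (by omega) hfi)
      have := Finset.card_le_card hsub
      rw [Finset.card_range] at this
      omega
    · have hsub : S ⊆ Finset.range m := Finset.filter_subset _ _
      have := Finset.card_le_card hsub
      rw [Finset.card_range] at this
      omega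

/-- length of the positive prefix of remainders -/
def kf (p t : ℕ) (s : Multiset ℕ) : ℕ :=
  ((Finset.range (t-1)).filter (fun i => rf p s (i+1) ≠ 0)).card

/-- the encoding map -/
def F (p t : ℕ) (s : Multiset ℕ) : List ℕ :=
  (List.range (kf p t s)).map (fun i => rf p s (i+1))

lemma kf_spec (hp : 2 ≤ p) (ht : 1 ≤ t)
    (hcard : Multiset.card s = (p - 1) * t + 1)
    (hsum : (s.map (fun a => ((p : ℚ) ^ a)⁻¹)).sum = 1) :
    (∀ i, i < kf p t s → rf p s (i+1) ≠ 0) ∧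
    (∀ i, kf p t s ≤ i → i < t - 1 → rf p s (i+1) = 0) ∧ kf p t s ≤ t - 1 := by
  have h0 : 0 ∉ s := zero_not_mem hp ht hcard hsum
  have hRq0 : Rq p s 0 = 1 := Rq_zero hp h0 hsum
  have hzt : ∀ j, rf p s (j+1) = 0 → rf p s (j+1+1) = 0 := fun j h => rf_zero_tail hp hRq0 h
  have heq := filter_range_eq (fun i => rf p s (i+1)) (t-1) hzt
  beta_reduce at heq
  refine ⟨?_, ?_, ?_⟩
  · intro i hi
    have : i ∈ Finset.range (kf p t s) := Finset.mem_range.mpr hi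
    rw [kf, ← heq] at this
    exact (Finset.mem_filter.mp this).2
  · intro i hik hit
    by_contra h
    have : i ∈ (Finset.range (t-1)).filter (fun i => rf p s (i+1) ≠ 0) :=
      Finset.mem_filter.mpr ⟨Finset.mem_range.mpr hit, h⟩
    rw [heq] at this
    have := Finset.mem_range.mp this
    rw [kf] at hik
    omega
  · rw [kf]
    calc ((Finset.range (t-1)).filter (fun i => rf p s (i+1) ≠ 0)).card
        ≤ (Finset.range (t-1)).card := Finset.card_le_card (Finset.filter_subset _ _)
      _ = t - 1 := Finset.card_range _

lemma F_sum (hp : 2 ≤ p) (ht : 1 ≤ t)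
    (hcard : Multiset.card s = (p - 1) * t + 1)
    (hsum : (s.map (fun a => ((p : ℚ) ^ a)⁻¹)).sum = 1) :
    (F p t s).sum = t - 1 := by
  obtain ⟨h1, h2, h3⟩ := kf_spec hp ht hcard hsum
  rw [F, list_range_map_sum]
  have hstep : ∑ i ∈ Finset.range (kf p t s), rf p s (i+1)
      = ∑ i ∈ Finset.range (t-1), rf p s (i+1) := by
    apply Finset.sum_subset (Finset.range_subset_range.mpr h3)
    intro x hx hnx
    exact h2 x (by
      have := Finset.mem_range.not.mp hnx; omega) (Finset.mem_range.mp hx)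
  rw [hstep]
  have htt : t - 1 + 1 = t := by omega
  have hs := rf_sum hp ht hcard hsum
  rw [← htt, Finset.sum_range_succ'] at hs
  have hrf0 : rf p s 0 = 1 := rfl
  omega

lemma F_mem (hp : 2 ≤ p) (ht : 1 ≤ t)
    (hcard : Multiset.card s = (p - 1) * t + 1)
    (hsum : (s.map (fun a => ((p : ℚ) ^ a)⁻¹)).sum = 1) :
    F p t s ∈ comps (t-1) := by
  obtain ⟨h1, _, _⟩ := kf_spec hp ht hcard hsum
  have hpos : ∀ x ∈ F p t s, 0 < x := by
    intro x hx
    obtain ⟨i, hi, rfl⟩ := List.mem_map.mp hx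
    have := h1 i (List.mem_range.mp hi)
    omega
  have := comps_mem (F p t s) hpos
  rwa [F_sum hp ht hcard hsum] at this

lemma F_inj (hp : 2 ≤ p) (ht : 1 ≤ t) {s1 s2 : Multiset ℕ}
    (hcard1 : Multiset.card s1 = (p - 1) * t + 1)
    (hsum1 : (s1.map (fun a => ((p : ℚ) ^ a)⁻¹)).sum = 1)
    (hcard2 : Multiset.card s2 = (p - 1) * t + 1)
    (hsum2 : (s2.map (fun a => ((p : ℚ) ^ a)⁻¹)).sum = 1)
    (hF : F p t s1 = F p t s2) : s1 = s2 := by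
  have h01 : 0 ∉ s1 := zero_not_mem hp ht hcard1 hsum1
  have h02 : 0 ∉ s2 := zero_not_mem hp ht hcard2 hsum2
  have hRq01 : Rq p s1 0 = 1 := Rq_zero hp h01 hsum1
  have hRq02 : Rq p s2 0 = 1 := Rq_zero hp h02 hsum2
  obtain ⟨ha1, ha2, ha3⟩ := kf_spec hp ht hcard1 hsum1
  obtain ⟨hb1, hb2, hb3⟩ := kf_spec hp ht hcard2 hsum2
  have hk : kf p t s1 = kf p t s2 := by
    have := congrArg List.length hF
    simpa [F] using this
  have hrf : ∀ j, j ≤ t → rf p s1 j = rf p s2 j := by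
    intro j hj
    match j with
    | 0 => rfl
    | (i+1) =>
      rcases Nat.lt_or_ge i (kf p t s1) with hik | hik
      · rw [F, F, ← hk] at hF
        have := List.map_eq_map_iff.mp hF i (List.mem_range.mpr hik)
        exact this
      · rcases Nat.lt_or_ge i (t-1) with hit | hit
        · rw [ha2 i hik hit, hb2 i (hk ▸ hik) hit]
        · have hjt : i + 1 = t := by omega
          rw [hjt, rf_t_eq_zero hp ht hcard1 hsum1, rf_t_eq_zero hp ht hcard2 hsum2]
  apply Multiset.ext.mpr
  intro a
  match a with
  | 0 =>
    rw [Multiset.count_eq_zero.mpr h01, Multiset.count_eq_zero.mpr h02]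
  | (j+1) =>
    rcases Nat.lt_or_ge t (j+1) with hjt | hjt
    · rw [count_gt hp ht hcard1 hsum1 hjt, count_gt hp ht hcard2 hsum2 hjt]
    · rw [count_eq hp hRq01 j, count_eq hp hRq02 j, hrf j (by omega), hrf (j+1) (by omega)]

end Stmt19

theorem stmt_19 (p t : ℕ) (hp : p.Prime) (ht : 1 ≤ t) :
    {s : Multiset ℕ | Multiset.card s = (p - 1) * t + 1 ∧
        (s.map (fun a => ((p : ℚ) ^ a)⁻¹)).sum = 1}.Finite ∧
    Set.ncard {s : Multiset ℕ | Multiset.card s = (p - 1) * t + 1 ∧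
        (s.map (fun a => ((p : ℚ) ^ a)⁻¹)).sum = 1} ≤ 2 ^ (t - 1) := by
  have hp2 : 2 ≤ p := hp.two_le
  set A := {s : Multiset ℕ | Multiset.card s = (p - 1) * t + 1 ∧
        (s.map (fun a => ((p : ℚ) ^ a)⁻¹)).sum = 1} with hA
  have hmem : ∀ s ∈ A, Stmt19.F p t s ∈ Stmt19.comps (t-1) := fun s hs =>
    Stmt19.F_mem hp2 ht hs.1 hs.2
  have hinj : Set.InjOn (Stmt19.F p t) A := fun s1 h1 s2 h2 h =>
    Stmt19.F_inj hp2 ht h1.1 h1.2 h2.1 h2.2 h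
  have himg : Stmt19.F p t '' A ⊆ ↑(Stmt19.comps (t-1)) := by
    rintro _ ⟨s, hs, rfl⟩
    exact hmem s hs
  have hfinimg : (Stmt19.F p t '' A).Finite :=
    Set.Finite.subset (Stmt19.comps (t-1)).finite_toSet himg
  have hfin : A.Finite := Set.Finite.of_finite_image hfinimg hinj
  refine ⟨hfin, ?_⟩
  calc A.ncard = (Stmt19.F p t '' A).ncard := (Set.ncard_image_of_injOn hinj).symm
    _ ≤ (↑(Stmt19.comps (t-1)) : Set (List ℕ)).ncard :=
        Set.ncard_le_ncard himg (Stmt19.comps (t-1)).finite_toSet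
    _ = (Stmt19.comps (t-1)).card := Set.ncard_coe_finset _
    _ ≤ 2^(t-1) := Stmt19.comps_card _
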